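/- Let n ≥ 2 and 1 ≤ r ≤ n−1 be integers, let V = {1,…,n} and let R ⊆ V with |R| = r. Then for every ranking ρ on the subsets of V, J_n^{(r)}(q) = ∑_f q^{l_ρ(f)}, where the sum is over all maps f : V → V such that f(v) = v for all v ∈ R and for every v ∈ V some iterate f^k(v) lies in R, and where l_ρ(f) = ∑_{i≥1} C(u_i,2) + ∑_{v ∈ V∖R} (w_ρ(f(v)) − 1). -/

import Mathlib

noncomputable section

/-- `[m]_q = 1 + q + ⋯ + q^{m-1}` as a polynomial in `q` (so `[0]_q = 0`). -/
def qNat (m : ℕ) : Polynomial ℚ := ∑ i ∈ Finset.range m, Polynomial.X ^ i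

/-- The polynomials `J_n^{(r)}(q)`: `J_n^{(0)} = δ_{n,0}`, `J_r^{(r)} = 1` for
`r ≥ 1`, and for `n > r ≥ 1` the recurrence
`J_n^{(r)} = ∑_{j=1}^{n−r} [r]_q^j q^{C(j,2)} C(n−r,j) J_{n−r}^{(j)}`.
(For `n < r` we set the unconstrained value `J_n^{(r)} = 0`.) -/
def J (n r : ℕ) : Polynomial ℚ :=
  if hr : r = 0 then (if n = 0 then 1 else 0)
  else if hn : n ≤ r then (if n = r then 1 else 0)
  else
    ∑ j ∈ Finset.Icc 1 (n - r),
      qNat r ^ j * Polynomial.X ^ j.choose 2 * ((n - r).choose j : Polynomial ℚ) * J (n - r) j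
termination_by n
decreasing_by omega


/-- A rooted forest on the vertex set `Fin n` with root set `R`, encoded by the
map `f` sending each non-root to its parent and each root to itself: `f v = v`
for `v ∈ R`, and every vertex reaches `R` under iteration of `f`. -/
def IsForest {n : ℕ} (R : Finset (Fin n)) (f : Fin n → Fin n) : Prop :=
  (∀ v ∈ R, f v = v) ∧ ∀ v, ∃ k, f^[k] v ∈ R

/-- The level `L(v)` of a vertex: the least `k ≥ 0` with `f^[k] v ∈ R`. -/
def level {n : ℕ} (R : Finset (Fin n)) (f : Fin n → Fin n) (v : Fin n) : ℕ :=
  sInf {k | f^[k] v ∈ R}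

/-- `V_i`, the set of vertices at level `i`. -/
def levelSet {n : ℕ} (R : Finset (Fin n)) (f : Fin n → Fin n) (i : ℕ) : Finset (Fin n) :=
  Finset.univ.filter fun v => level R f v = i

/-- A ranking on the subsets of `Fin n`: a bijection `P ≃ {1, …, |P|}` for each
subset `P` (here realized as an equivalence with `Fin P.card`). -/
def Ranking (n : ℕ) : Type :=
  ∀ P : Finset (Fin n), {v // v ∈ P} ≃ Fin P.card

/-- The weight `w_ρ(v) = ρ(V_{L(v)})(v) ∈ {1, …, |V_{L(v)}|}` of a vertex. -/
def weight {n : ℕ} (ρ : Ranking n) (R : Finset (Fin n)) (f : Fin n → Fin n) (v : Fin n) : ℕ :=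
  (ρ (levelSet R f (level R f v))
    ⟨v, Finset.mem_filter.mpr ⟨Finset.mem_univ v, rfl⟩⟩ : Fin _) + 1

/-- The level statistic
`l_ρ(f) = ∑_{i≥1} C(u_i,2) + ∑_{v ∉ R} (w_ρ(f(v)) − 1)` where `u_i = |V_i|`
(the levels of a forest on `n` vertices are `< n`, so the first sum may be
taken over `1 ≤ i ≤ n`). -/
def levelStat {n : ℕ} (ρ : Ranking n) (R : Finset (Fin n)) (f : Fin n → Fin n) : ℕ :=
  (∑ i ∈ Finset.Icc 1 n, ((levelSet R f i).card).choose 2) +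
    ∑ v ∈ Finset.univ \ R, (weight ρ R f (f v) - 1)

namespace ForestAux
open Finset Polynomial

variable {α : Type} [Fintype α] [DecidableEq α]
set_option linter.unusedSectionVars false

def GRanking (α : Type) [Fintype α] [DecidableEq α] : Type :=
  ∀ P : Finset α, {v // v ∈ P} ≃ Fin P.card

def glevel (R : Finset α) (f : α → α) (v : α) : ℕ := sInf {k | f^[k] v ∈ R}

def glevelSet (R : Finset α) (f : α → α) (i : ℕ) : Finset α :=
  Finset.univ.filter fun v => glevel R f v = i

def gweight (ρ : GRanking α) (R : Finset α) (f : α → α) (v : α) : ℕ :=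
  (ρ (glevelSet R f (glevel R f v))
    ⟨v, Finset.mem_filter.mpr ⟨Finset.mem_univ v, rfl⟩⟩ : Fin _) + 1

def gstat (ρ : GRanking α) (R : Finset α) (f : α → α) : ℕ :=
  (∑ i ∈ Finset.Icc 1 (Fintype.card α), ((glevelSet R f i).card).choose 2) +
    ∑ v ∈ Finset.univ \ R, (gweight ρ R f (f v) - 1)

def gForest (R : Finset α) (f : α → α) : Prop :=
  (∀ v ∈ R, f v = v) ∧ ∀ v, ∃ k, f^[k] v ∈ R

section basic

variable {R : Finset α} {f : α → α}

lemma glevel_of_mem {v : α} (h : v ∈ R) : glevel R f v = 0 :=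
  Nat.sInf_eq_zero.mpr (Or.inl (by simpa using h))

lemma iterate_glevel_mem {v : α} (hf : ∃ k, f^[k] v ∈ R) :
    f^[glevel R f v] v ∈ R := Nat.sInf_mem hf

lemma glevel_eq_zero_iff {v : α} (hf : ∃ k, f^[k] v ∈ R) :
    glevel R f v = 0 ↔ v ∈ R := by
  constructor
  · intro h
    have := iterate_glevel_mem (f := f) hf
    rw [h] at this; simpa using this
  · exact glevel_of_mem

lemma glevel_succ {v : α} (hf : ∃ k, f^[k] v ∈ R) (hv : v ∉ R) :
    glevel R f v = glevel R f (f v) + 1 := by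
  have h0 : glevel R f v ≠ 0 := fun h => hv ((glevel_eq_zero_iff hf).mp h)
  obtain ⟨m, hm⟩ := Nat.exists_eq_succ_of_ne_zero h0
  have h1 : f^[m] (f v) ∈ R := by
    have := iterate_glevel_mem (f := f) hf
    rw [hm] at this
    simpa [Function.iterate_succ_apply] using this
  have le1 : glevel R f (f v) ≤ m := Nat.sInf_le h1
  have le2 : m ≤ glevel R f (f v) := by
    by_contra h
    push_neg at h
    have hmem : f^[glevel R f (f v)] (f v) ∈ R :=
      iterate_glevel_mem (v := f v) ⟨m, h1⟩
    have h2 : (glevel R f (f v)) + 1 ∈ {k | f^[k] v ∈ R} := by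
      simpa [Function.iterate_succ_apply] using hmem
    have := Nat.sInf_le h2
    rw [show sInf {k | f^[k] v ∈ R} = glevel R f v from rfl, hm] at this
    omega
  omega

lemma glevel_iterate (hf : ∀ w, ∃ k, f^[k] w ∈ R) {v : α} (k : ℕ)
    (hk : k ≤ glevel R f v) : glevel R f (f^[k] v) = glevel R f v - k := by
  induction k with
  | zero => simp
  | succ k ih =>
    have hk' : k ≤ glevel R f v := by omega
    have h1 := ih hk'
    have hnot : f^[k] v ∉ R := by
      intro hmem
      have := glevel_of_mem (f := f) hmem
      omega
    have h2 := glevel_succ (hf (f^[k] v)) hnot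
    rw [Function.iterate_succ_apply']
    omega

lemma mem_glevelSet {v : α} {i : ℕ} : v ∈ glevelSet R f i ↔ glevel R f v = i := by
  simp [glevelSet]

lemma glevelSet_zero (hf : ∀ w, ∃ k, f^[k] w ∈ R) : glevelSet R f 0 = R := by
  ext v
  rw [mem_glevelSet, glevel_eq_zero_iff (hf v)]

lemma glevelSet_nonempty_of_le (hf : ∀ w, ∃ k, f^[k] w ∈ R) {v : α} {i j : ℕ}
    (h : glevel R f v = i) (hj : j ≤ i) : (glevelSet R f j).Nonempty := by
  refine ⟨f^[i - j] v, ?_⟩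
  rw [mem_glevelSet, glevel_iterate hf (i - j) (by omega)]
  omega

lemma glevelSet_card_bound (hf : ∀ w, ∃ k, f^[k] w ∈ R) {i : ℕ}
    (hne : (glevelSet R f i).Nonempty) : i ≤ Fintype.card α - R.card := by
  obtain ⟨v, hv⟩ := hne
  rw [mem_glevelSet] at hv
  have hmaps : ∀ j ∈ Finset.Icc 1 i, f^[i - j] v ∈ Finset.univ \ R := by
    intro j hj
    rw [Finset.mem_Icc] at hj
    have hlev : glevel R f (f^[i - j] v) = j := by
      rw [glevel_iterate hf (i - j) (by omega)]; omega
    simp only [Finset.mem_sdiff, Finset.mem_univ, true_and]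
    intro hmem
    have := glevel_of_mem (f := f) hmem
    omega
  have hinj : Set.InjOn (fun j => f^[i - j] v) (Finset.Icc 1 i) := by
    intro a ha b hb hab
    simp only [Finset.coe_Icc, Set.mem_Icc] at ha hb
    have h1 : glevel R f (f^[i - a] v) = a := by
      rw [glevel_iterate hf (i - a) (by omega)]; omega
    have h2 : glevel R f (f^[i - b] v) = b := by
      rw [glevel_iterate hf (i - b) (by omega)]; omega
    simp only at hab
    rw [← h1, ← h2, hab]
  have := Finset.card_le_card_of_injOn _ hmaps hinj
  rw [Nat.card_Icc, Finset.card_sdiff_of_subset (Finset.subset_univ R), Finset.card_univ] at this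
  omega

end basic

section sub

variable (R : Finset α)

abbrev Aux := {v : α // v ∉ R}

def emb : Aux R ↪ α := ⟨Subtype.val, Subtype.val_injective⟩

@[simp] lemma emb_apply (v : Aux R) : emb R v = v.1 := rfl

def mapSubtypeEquiv (P : Finset (Aux R)) :
    {v // v ∈ P} ≃ {v : α // v ∈ P.map (emb R)} where
  toFun x := ⟨x.1.1, Finset.mem_map_of_mem _ x.2⟩
  invFun y := ⟨⟨y.1, fun hy => by
      obtain ⟨a, _, h⟩ := Finset.mem_map.mp y.2
      rw [← h] at hy
      exact a.2 hy⟩, by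
    obtain ⟨⟨av, hav⟩, ha, h⟩ := Finset.mem_map.mp y.2
    simp only [emb_apply] at h
    subst h
    exact ha⟩
  left_inv x := by ext; rfl
  right_inv y := by ext; rfl

def rhoAux (ρ : GRanking α) : GRanking (Aux R) := fun P =>
  ((mapSubtypeEquiv R P).trans (ρ (P.map (emb R)))).trans
    (finCongr (Finset.card_map _))

lemma rhoAux_apply (ρ : GRanking α) (P : Finset (Aux R)) (x : {v // v ∈ P}) :
    (rhoAux R ρ P x : ℕ) =
      (ρ (P.map (emb R)) ⟨x.1.1, Finset.mem_map_of_mem _ x.2⟩ : ℕ) := rfl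

lemma rank_congr (ρ : GRanking α) {P Q : Finset α} (h : P = Q) (v : α)
    (hv : v ∈ P) : (ρ P ⟨v, hv⟩ : ℕ) = (ρ Q ⟨v, h ▸ hv⟩ : ℕ) := by
  subst h; rfl

/-- restriction of a forest to the complement of the root set -/
def resF (f : α → α) : Aux R → Aux R :=
  fun v => if h : f v.1 ∈ R then v else ⟨f v.1, h⟩

/-- the level-one set, as a finset of the complement subtype -/
def oneSet (f : α → α) : Finset (Aux R) :=
  Finset.univ.filter fun v => glevel R f v.1 = 1

/-- reconstruction of a forest from level-one data and the rest -/
def mkF (S' : Finset (Aux R)) (p : {x // x ∈ S'} → {x // x ∈ R})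
    (g : Aux R → Aux R) : α → α :=
  fun v => if h : v ∈ R then v
    else if h2 : (⟨v, h⟩ : Aux R) ∈ S' then (p ⟨⟨v, h⟩, h2⟩).1
    else (g ⟨v, h⟩).1

variable {R}

lemma mem_oneSet {f : α → α} {v : Aux R} :
    v ∈ oneSet R f ↔ glevel R f v.1 = 1 := by simp [oneSet]

section forward

variable {f : α → α} (hf : gForest R f)
include hf

lemma oneSet_map : (oneSet R f).map (emb R) = glevelSet R f 1 := by
  ext x
  simp only [Finset.mem_map, mem_glevelSet]
  constructor
  · rintro ⟨a, ha, rfl⟩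
    exact mem_oneSet.mp ha
  · intro hx
    have hxR : x ∉ R := fun h => by
      have := glevel_of_mem (f := f) h; omega
    exact ⟨⟨x, hxR⟩, mem_oneSet.mpr hx, rfl⟩

lemma oneSet_nonempty (hU : R ≠ Finset.univ) : (oneSet R f).Nonempty := by
  have : ∃ v : α, v ∉ R := by
    by_contra h
    push_neg at h
    exact hU (Finset.eq_univ_iff_forall.mpr h)
  obtain ⟨v, hv⟩ := this
  have h1 : 1 ≤ glevel R f v :=
    Nat.one_le_iff_ne_zero.mpr (fun h => hv ((glevel_eq_zero_iff (hf.2 v)).mp h))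
  obtain ⟨w, hw⟩ := glevelSet_nonempty_of_le hf.2 (rfl : glevel R f v = _) h1
  rw [mem_glevelSet] at hw
  have hwR : w ∉ R := fun h => by have := glevel_of_mem (f := f) h; omega
  exact ⟨⟨w, hwR⟩, mem_oneSet.mpr hw⟩

lemma glevel_pos_of_aux (v : Aux R) : ∃ m, glevel R f v.1 = m + 1 :=
  Nat.exists_eq_succ_of_ne_zero (fun h => v.2 ((glevel_eq_zero_iff (hf.2 v.1)).mp h))

lemma glevel_f_of_aux (v : Aux R) : glevel R f (f v.1) + 1 = glevel R f v.1 :=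
  (glevel_succ (hf.2 v.1) v.2).symm

lemma resF_reach : ∀ (m : ℕ) (v : Aux R), glevel R f v.1 = m + 1 →
    ∃ k, (resF R f)^[k] v ∈ oneSet R f := by
  intro m
  induction m with
  | zero => exact fun v hv => ⟨0, mem_oneSet.mpr hv⟩
  | succ m ih =>
    intro v hv
    have hfv : glevel R f (f v.1) = m + 1 := by
      have := glevel_f_of_aux hf v; omega
    have hfvR : f v.1 ∉ R := fun h => by
      have := glevel_of_mem (f := f) h; omega
    have hres : resF R f v = ⟨f v.1, hfvR⟩ := by simp [resF, hfvR]
    obtain ⟨k, hk⟩ := ih ⟨f v.1, hfvR⟩ hfv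
    exact ⟨k + 1, by rw [Function.iterate_succ_apply, hres]; exact hk⟩

lemma resF_forest : gForest (oneSet R f) (resF R f) := by
  constructor
  · intro v hv
    rw [mem_oneSet] at hv
    have hfv : glevel R f (f v.1) = 0 := by
      have := glevel_succ (hf.2 v.1) v.2; omega
    have : f v.1 ∈ R := (glevel_eq_zero_iff (hf.2 (f v.1))).mp hfv
    simp [resF, this]
  · intro v
    obtain ⟨m, hm⟩ : ∃ m, glevel R f v.1 = m + 1 :=
      Nat.exists_eq_succ_of_ne_zero (fun h => v.2 ((glevel_eq_zero_iff (hf.2 v.1)).mp h))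
    exact resF_reach hf m v hm

lemma resF_glevel : ∀ (m : ℕ) (v : Aux R), glevel R f v.1 = m + 1 →
    glevel (oneSet R f) (resF R f) v = m := by
  intro m
  induction m with
  | zero => exact fun v hv => glevel_of_mem (mem_oneSet.mpr hv)
  | succ m ih =>
    intro v hv
    have hfv : glevel R f (f v.1) = m + 1 := by
      have := glevel_f_of_aux hf v; omega
    have hfvR : f v.1 ∉ R := fun h => by
      have := glevel_of_mem (f := f) h; omega
    have hres : resF R f v = ⟨f v.1, hfvR⟩ := by simp [resF, hfvR]
    have hnot : v ∉ oneSet R f := by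
      rw [mem_oneSet]; omega
    have := glevel_succ ((resF_forest hf).2 v) hnot
    rw [hres] at this
    rw [this, ih ⟨f v.1, hfvR⟩ hfv]

lemma resF_glevel_iff {m : ℕ} {v : Aux R} :
    glevel (oneSet R f) (resF R f) v = m ↔ glevel R f v.1 = m + 1 := by
  obtain ⟨m', hm'⟩ := glevel_pos_of_aux hf v
  have := resF_glevel hf m' v hm'
  constructor <;> intro h <;> omega

lemma glevelSet_map_res (i : ℕ) :
    (glevelSet (oneSet R f) (resF R f) i).map (emb R) = glevelSet R f (i + 1) := by
  ext x
  simp only [Finset.mem_map, mem_glevelSet, emb_apply]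
  constructor
  · rintro ⟨a, ha, rfl⟩
    exact (resF_glevel_iff hf).mp ha
  · intro hx
    have hxR : x ∉ R := fun h => by
      have := glevel_of_mem (f := f) h; omega
    exact ⟨⟨x, hxR⟩, (resF_glevel_iff hf).mpr hx, rfl⟩

end forward

section mk

variable {S' : Finset (Aux R)} {p : {x // x ∈ S'} → {x // x ∈ R}} {g : Aux R → Aux R}

lemma mkF_of_mem_R {v : α} (hv : v ∈ R) : mkF R S' p g v = v := by
  simp [mkF, hv]

lemma mkF_of_mem_S' (v : Aux R) (hv : v ∈ S') :
    mkF R S' p g v.1 = (p ⟨v, hv⟩).1 := by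
  simp only [mkF, dif_neg v.2, Subtype.coe_eta, dif_pos hv]

lemma mkF_of_not_mem (v : Aux R) (hv : v ∉ S') :
    mkF R S' p g v.1 = (g v).1 := by
  simp only [mkF, dif_neg v.2, Subtype.coe_eta, dif_neg hv]

variable (hg : gForest S' g)
include hg

lemma mk_reach : ∀ w : α, ∃ k, (mkF R S' p g)^[k] w ∈ R := by
  have key : ∀ (m : ℕ) (v : Aux R), glevel S' g v = m →
      ∃ k, (mkF R S' p g)^[k] v.1 ∈ R := by
    intro m
    induction m with
    | zero =>
      intro v hv
      have hvS : v ∈ S' := (glevel_eq_zero_iff (hg.2 v)).mp hv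
      exact ⟨1, by rw [Function.iterate_one, mkF_of_mem_S' v hvS]; exact (p ⟨v, hvS⟩).2⟩
    | succ m ih =>
      intro v hv
      have hvS : v ∉ S' := fun h => by
        have := glevel_of_mem (f := g) h; omega
      have hgv : glevel S' g (g v) = m := by
        have := glevel_succ (hg.2 v) hvS; omega
      obtain ⟨k, hk⟩ := ih (g v) hgv
      refine ⟨k + 1, ?_⟩
      rw [Function.iterate_succ_apply, mkF_of_not_mem v hvS]
      exact hk
  intro w
  by_cases hw : w ∈ R
  · exact ⟨0, hw⟩
  · exact key _ ⟨w, hw⟩ rfl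

lemma mk_forest : gForest R (mkF R S' p g) :=
  ⟨fun _ hv => mkF_of_mem_R hv, mk_reach hg⟩

lemma mk_glevel : ∀ (m : ℕ) (v : Aux R), glevel S' g v = m →
    glevel R (mkF R S' p g) v.1 = m + 1 := by
  have hreach := mk_reach (p := p) hg
  intro m
  induction m with
  | zero =>
    intro v hv
    have hvS : v ∈ S' := (glevel_eq_zero_iff (hg.2 v)).mp hv
    have h1 : glevel R (mkF R S' p g) v.1 =
        glevel R (mkF R S' p g) (mkF R S' p g v.1) + 1 :=
      glevel_succ (hreach v.1) v.2
    rw [mkF_of_mem_S' v hvS] at h1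
    rw [h1, glevel_of_mem (p ⟨v, hvS⟩).2]
  | succ m ih =>
    intro v hv
    have hvS : v ∉ S' := fun h => by
      have := glevel_of_mem (f := g) h; omega
    have hgv : glevel S' g (g v) = m := by
      have := glevel_succ (hg.2 v) hvS; omega
    have h1 : glevel R (mkF R S' p g) v.1 =
        glevel R (mkF R S' p g) (mkF R S' p g v.1) + 1 :=
      glevel_succ (hreach v.1) v.2
    rw [mkF_of_not_mem v hvS] at h1
    rw [h1, ih (g v) hgv]

lemma oneSet_mk : oneSet R (mkF R S' p g) = S' := by
  ext v
  rw [mem_oneSet]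
  have := mk_glevel (p := p) hg (glevel S' g v) v rfl
  rw [this]
  rw [← glevel_eq_zero_iff (hg.2 v)]
  omega

lemma res_mk : resF R (mkF R S' p g) = g := by
  funext v
  by_cases hv : v ∈ S'
  · have h1 : mkF R S' p g v.1 = (p ⟨v, hv⟩).1 := mkF_of_mem_S' v hv
    have h2 : g v = v := hg.1 v hv
    simp [resF, h1, (p ⟨v, hv⟩).2, h2]
  · have h1 : mkF R S' p g v.1 = (g v).1 := mkF_of_not_mem v hv
    simp [resF, h1, (g v).2]

end mk

lemma mk_res {f : α → α} (hf : gForest R f) {S' : Finset (Aux R)}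
    (hS : oneSet R f = S') (p : {x // x ∈ S'} → {x // x ∈ R})
    (hp : ∀ v : {x // x ∈ S'}, (p v).1 = f v.1.1) :
    mkF R S' p (resF R f) = f := by
  funext v
  by_cases hv : v ∈ R
  · rw [mkF_of_mem_R hv, hf.1 v hv]
  · by_cases hv2 : (⟨v, hv⟩ : Aux R) ∈ S'
    · rw [show v = (⟨v, hv⟩ : Aux R).1 from rfl, mkF_of_mem_S' ⟨v, hv⟩ hv2, hp]
    · have hlev : glevel R f v ≠ 1 := by
        rw [← hS] at hv2
        rw [mem_oneSet] at hv2
        exact hv2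
      obtain ⟨m, hm⟩ := glevel_pos_of_aux hf ⟨v, hv⟩
      have hfv : f v ∉ R := by
        intro h
        have h0 := glevel_of_mem (f := f) h
        have := glevel_succ (hf.2 v) hv
        omega
      rw [show v = (⟨v, hv⟩ : Aux R).1 from rfl, mkF_of_not_mem ⟨v, hv⟩ hv2]
      simp [resF, hfv]

lemma gweight_eq (ρ : GRanking α) (R : Finset α) (f : α → α) (v : α) {i : ℕ}
    (h : glevel R f v = i) :
    gweight ρ R f v =
      (ρ (glevelSet R f i) ⟨v, by rw [mem_glevelSet, h]⟩ : ℕ) + 1 := by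
  subst h; rfl

lemma card_aux (R : Finset α) :
    Fintype.card (Aux R) = Fintype.card α - R.card := by
  rw [Fintype.card_subtype_compl, Fintype.card_coe]

lemma stat_decomp {R : Finset α} {f : α → α} (hf : gForest R f) (hR : R.Nonempty)
    (ρ : GRanking α) (p : {x // x ∈ oneSet R f} → {x // x ∈ R})
    (hp : ∀ v : {x // x ∈ oneSet R f}, (p v).1 = f v.1.1) :
    gstat ρ R f = (oneSet R f).card.choose 2 +
      (∑ v ∈ Finset.univ, (ρ R (p v) : ℕ)) +
      gstat (rhoAux R ρ) (oneSet R f) (resF R f) := by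
  have hN1 : 1 ≤ Fintype.card α := Fintype.card_pos_iff.mpr ⟨hR.choose⟩
  have hrpos : 1 ≤ R.card := hR.card_pos
  have hforest' : gForest (oneSet R f) (resF R f) := resF_forest hf
  have hNN' : Fintype.card (Aux R) = Fintype.card α - R.card := card_aux R
  have hcard1 : (glevelSet R f 1).card = (oneSet R f).card := by
    rw [← oneSet_map hf, Finset.card_map]
  have hcards : ∀ i, (glevelSet R f (i + 1)).card
      = (glevelSet (oneSet R f) (resF R f) i).card := fun i => by
    rw [← glevelSet_map_res hf i, Finset.card_map]
  -- Part A : the first sums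
  have hA : ∑ i ∈ Finset.Icc 1 (Fintype.card α), ((glevelSet R f i).card).choose 2
      = (oneSet R f).card.choose 2 +
        ∑ i ∈ Finset.Icc 1 (Fintype.card (Aux R)),
          ((glevelSet (oneSet R f) (resF R f) i).card).choose 2 := by
    have h1mem : 1 ∈ Finset.Icc 1 (Fintype.card α) := by
      rw [Finset.mem_Icc]; omega
    rw [← Finset.add_sum_erase _ _ h1mem, Finset.Icc_erase_left, hcard1]
    congr 1
    have hmap : (Finset.Ioc 0 (Fintype.card α - 1)).map
        (addRightEmbedding 1) = Finset.Ioc 1 (Fintype.card α) := by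
      rw [Finset.map_add_right_Ioc]
      congr 1
      omega
    rw [← hmap, Finset.sum_map]
    have hstep : ∀ i ∈ Finset.Ioc 0 (Fintype.card α - 1),
        ((glevelSet R f (addRightEmbedding 1 i)).card).choose 2
        = ((glevelSet (oneSet R f) (resF R f) i).card).choose 2 := by
      intro i _
      have : (addRightEmbedding 1 i : ℕ) = i + 1 := rfl
      rw [this, hcards]
    rw [Finset.sum_congr rfl hstep]
    apply (Finset.sum_subset ?_ ?_).symm
    · intro i hi
      rw [Finset.mem_Icc] at hi
      rw [Finset.mem_Ioc]
      omega
    · intro i hi hni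
      rw [Finset.mem_Ioc] at hi
      rw [Finset.mem_Icc] at hni
      have hgt : Fintype.card (Aux R) < i := by omega
      have hempty : glevelSet (oneSet R f) (resF R f) i = ∅ := by
        rw [← Finset.not_nonempty_iff_eq_empty]
        intro hne
        have := glevelSet_card_bound hforest'.2 hne
        omega
      simp [hempty]
  -- pointwise weight identities
  have hw1 : ∀ v : {x // x ∈ oneSet R f},
      gweight ρ R f (f v.1.1) - 1 = (ρ R (p v) : ℕ) := by
    intro v
    have hlev1 : glevel R f v.1.1 = 1 := mem_oneSet.mp v.2
    have hfv0 : glevel R f (f v.1.1) = 0 := by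
      have := glevel_succ (hf.2 v.1.1) v.1.2; omega
    have hfvR : f v.1.1 ∈ R := (glevel_eq_zero_iff (hf.2 _)).mp hfv0
    rw [gweight_eq ρ R f _ hfv0,
      rank_congr ρ (glevelSet_zero hf.2) (f v.1.1) _]
    have hpv : p v = ⟨f v.1.1, hfvR⟩ := Subtype.ext (hp v)
    rw [hpv]
    omega
  have hw2 : ∀ v : Aux R, v ∉ oneSet R f →
      gweight ρ R f (f v.1) = gweight (rhoAux R ρ) (oneSet R f) (resF R f) (resF R f v) := by
    intro v hv
    have hlevv : glevel R f v.1 ≠ 1 := fun h => hv (mem_oneSet.mpr h)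
    obtain ⟨m, hm⟩ := glevel_pos_of_aux hf v
    have hm1 : 1 ≤ m := by omega
    have hfvlev : glevel R f (f v.1) = m := by
      have := glevel_f_of_aux hf v; omega
    have hfvR : f v.1 ∉ R := fun h => by
      have := glevel_of_mem (f := f) h; omega
    have hgv : resF R f v = ⟨f v.1, hfvR⟩ := by simp [resF, hfvR]
    have hgl : glevel (oneSet R f) (resF R f) (resF R f v) = m - 1 := by
      rw [resF_glevel_iff hf, hgv]
      show glevel R f (f v.1) = m - 1 + 1
      omega
    rw [gweight_eq ρ R f _ hfvlev, gweight_eq (rhoAux R ρ) _ _ _ hgl,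
      rhoAux_apply]
    have hmm : m - 1 + 1 = m := by omega
    have hEq : ((glevelSet (oneSet R f) (resF R f) (m - 1)).map (emb R)) = glevelSet R f m := by
      rw [glevelSet_map_res hf (m - 1), hmm]
    have key : ∀ (P Q : Finset α) (hPQ : P = Q) (a b : α) (hab : a = b) (ha : a ∈ P)
        (hb : b ∈ Q), (ρ P ⟨a, ha⟩ : ℕ) = (ρ Q ⟨b, hb⟩ : ℕ) := by
      intro P Q hPQ a b hab ha hb
      subst hPQ
      subst hab
      rfl
    congr 1
    exact key _ _ hEq.symm _ _ (congrArg Subtype.val hgv).symm _ _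
  -- Part B : the second sums
  have hsubS : (oneSet R f).map (emb R) ⊆ Finset.univ \ R := by
    intro x hx
    obtain ⟨a, _, rfl⟩ := Finset.mem_map.mp hx
    simp [a.2]
  have hset : ((Finset.univ \ R) \ (oneSet R f).map (emb R))
      = (Finset.univ \ oneSet R f).map (emb R) := by
    ext x
    simp only [Finset.mem_sdiff, Finset.mem_univ, true_and, Finset.mem_map,
      emb_apply]
    constructor
    · rintro ⟨hxR, hxS⟩
      refine ⟨⟨x, hxR⟩, ?_, rfl⟩
      intro hmem
      exact hxS ⟨⟨x, hxR⟩, hmem, rfl⟩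
    · rintro ⟨a, haS, rfl⟩
      refine ⟨a.2, ?_⟩
      rintro ⟨b, hbS, hba⟩
      exact haS (by rwa [Subtype.ext hba] at hbS)
  have hB : ∑ v ∈ Finset.univ \ R, (gweight ρ R f (f v) - 1)
      = (∑ v ∈ Finset.univ, (ρ R (p v) : ℕ)) +
        ∑ v ∈ Finset.univ \ oneSet R f,
          (gweight (rhoAux R ρ) (oneSet R f) (resF R f) (resF R f v) - 1) := by
    rw [← Finset.sum_sdiff hsubS, hset, Finset.sum_map, Finset.sum_map]
    simp only [emb_apply]
    rw [add_comm]
    congr 1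
    · rw [Finset.univ_eq_attach, ← Finset.sum_attach (oneSet R f)
        (fun v => gweight ρ R f (f v.1) - 1)]
      exact Finset.sum_congr rfl (fun x _ => hw1 x)
    · apply Finset.sum_congr rfl
      intro v hv
      rw [Finset.mem_sdiff] at hv
      rw [hw2 v hv.2]
  -- assemble
  show (∑ i ∈ Finset.Icc 1 (Fintype.card α), ((glevelSet R f i).card).choose 2)
      + (∑ v ∈ Finset.univ \ R, (gweight ρ R f (f v) - 1)) = _
  rw [hA, hB]
  show _ = _ + _ + ((∑ i ∈ Finset.Icc 1 (Fintype.card (Aux R)),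
      ((glevelSet (oneSet R f) (resF R f) i).card).choose 2)
    + ∑ v ∈ Finset.univ \ oneSet R f,
        (gweight (rhoAux R ρ) (oneSet R f) (resF R f) ((resF R f) v) - 1))
  omega

lemma f_mem_R_of_oneSet {R : Finset α} {f : α → α} (hf : gForest R f)
    {v : Aux R} (hv : v ∈ oneSet R f) : f v.1 ∈ R := by
  have h1 := mem_oneSet.mp hv
  have h2 := glevel_succ (hf.2 v.1) v.2
  exact (glevel_eq_zero_iff (hf.2 (f v.1))).mp (by omega)

lemma stat_decomp' {R : Finset α} {f : α → α} (hf : gForest R f) (hR : R.Nonempty)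
    (ρ : GRanking α) {S' : Finset (Aux R)} (hS : oneSet R f = S')
    (p : {x // x ∈ S'} → {x // x ∈ R})
    (hp : ∀ v : {x // x ∈ S'}, (p v).1 = f v.1.1) :
    gstat ρ R f = S'.card.choose 2 +
      (∑ v ∈ Finset.univ, (ρ R (p v) : ℕ)) +
      gstat (rhoAux R ρ) S' (resF R f) := by
  subst hS
  exact stat_decomp hf hR ρ p hp

open scoped Classical in
theorem gen : ∀ (n : ℕ) (α : Type) [Fintype α] [DecidableEq α] (R : Finset α),
    Fintype.card α ≤ n → R.Nonempty → ∀ ρ : GRanking α,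
    J (Fintype.card α) R.card =
      ∑ f ∈ Finset.univ.filter (fun f : α → α => gForest R f),
        (Polynomial.X : Polynomial ℚ) ^ gstat ρ R f := by
  intro n
  induction n with
  | zero =>
    intro α _ _ R hle hR ρ
    have : 1 ≤ Fintype.card α := Fintype.card_pos_iff.mpr ⟨hR.choose⟩
    omega
  | succ n ih =>
    intro α _ _ R hle hR ρ
    have hN1 : 1 ≤ Fintype.card α := Fintype.card_pos_iff.mpr ⟨hR.choose⟩
    by_cases hU : R = Finset.univ
    · subst hU
      have hfilter : Finset.univ.filter (fun f : α → α => gForest Finset.univ f)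
          = {id} := by
        ext f
        simp only [Finset.mem_filter, Finset.mem_univ, true_and,
          Finset.mem_singleton]
        constructor
        · intro h; funext v; exact h.1 v (Finset.mem_univ v)
        · rintro rfl; exact ⟨fun v _ => rfl, fun v => ⟨0, Finset.mem_univ v⟩⟩
      rw [hfilter, Finset.sum_singleton]
      have hstat : gstat ρ Finset.univ (id : α → α) = 0 := by
        unfold gstat
        have h1 : ∀ i ∈ Finset.Icc 1 (Fintype.card α),
            ((glevelSet Finset.univ (id : α → α) i).card).choose 2 = 0 := by
          intro i hi
          rw [Finset.mem_Icc] at hi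
          have : glevelSet Finset.univ (id : α → α) i = ∅ := by
            rw [← Finset.not_nonempty_iff_eq_empty]
            rintro ⟨v, hv⟩
            rw [mem_glevelSet] at hv
            rw [glevel_of_mem (Finset.mem_univ v)] at hv
            omega
          simp [this]
        rw [Finset.sum_congr rfl h1]
        simp
      rw [hstat, pow_zero, Finset.card_univ]
      rw [J]
      simp [Nat.one_le_iff_ne_zero.mp hN1]
    · -- inductive step
      have hrN : R.card < Fintype.card α := by
        have := Finset.card_lt_card (Finset.ssubset_univ_iff.mpr hU)
        rwa [Finset.card_univ] at this
      have hrpos : 1 ≤ R.card := hR.card_pos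
      have hN' : Fintype.card (Aux R) = Fintype.card α - R.card := card_aux R
      set t : Finset (Finset (Aux R)) :=
        Finset.univ.filter (fun S' => S'.Nonempty) with ht
      have hmaps : ∀ f ∈ Finset.univ.filter (fun f : α → α => gForest R f),
          oneSet R f ∈ t := by
        intro f hf
        rw [Finset.mem_filter] at hf
        rw [ht, Finset.mem_filter]
        exact ⟨Finset.mem_univ _, oneSet_nonempty hf.2 hU⟩
      rw [← Finset.sum_fiberwise_of_maps_to hmaps]
      -- inner sums
      have hinner : ∀ S' ∈ t,
          (∑ f ∈ (Finset.univ.filter (fun f : α → α => gForest R f)).filter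
              (fun f => oneSet R f = S'),
            (Polynomial.X : Polynomial ℚ) ^ gstat ρ R f)
          = (Polynomial.X : Polynomial ℚ) ^ (S'.card.choose 2) *
              qNat R.card ^ S'.card * J (Fintype.card α - R.card) S'.card := by
        intro S' hS'
        rw [ht, Finset.mem_filter] at hS'
        have hS'ne : S'.Nonempty := hS'.2
        -- bijection with pairs (p, g)
        have hbij :
            (∑ f ∈ (Finset.univ.filter (fun f : α → α => gForest R f)).filter
                (fun f => oneSet R f = S'),
              (Polynomial.X : Polynomial ℚ) ^ gstat ρ R f)
            = ∑ pg ∈ (Finset.univ ×ˢ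
                  Finset.univ.filter (fun g : Aux R → Aux R => gForest S' g) :
                  Finset (({x // x ∈ S'} → {x // x ∈ R}) × (Aux R → Aux R))),
                (Polynomial.X : Polynomial ℚ) ^
                  (S'.card.choose 2 + (∑ v ∈ Finset.univ, (ρ R (pg.1 v) : ℕ)) +
                    gstat (rhoAux R ρ) S' pg.2) := by
          refine Finset.sum_bij'
            (fun f hf => (fun v => ⟨f v.1.1, f_mem_R_of_oneSet
                (Finset.mem_filter.mp (Finset.mem_filter.mp hf).1).2
                (by rw [(Finset.mem_filter.mp hf).2]; exact v.2)⟩, resF R f))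
            (fun pg hpg => mkF R S' pg.1 pg.2) ?_ ?_ ?_ ?_ ?_
          · intro f hf
            rw [Finset.mem_filter] at hf
            obtain ⟨hf1, hf2⟩ := hf
            rw [Finset.mem_filter] at hf1
            rw [Finset.mem_product]
            refine ⟨Finset.mem_univ _, Finset.mem_filter.mpr ⟨Finset.mem_univ _, ?_⟩⟩
            show gForest S' (resF R f)
            rw [← hf2]
            exact resF_forest hf1.2
          · intro pg hpg
            rw [Finset.mem_product, Finset.mem_filter] at hpg
            obtain ⟨-, -, hg⟩ := hpg
            rw [Finset.mem_filter, Finset.mem_filter]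
            exact ⟨⟨Finset.mem_univ _, mk_forest hg⟩, oneSet_mk hg⟩
          · intro f hf
            rw [Finset.mem_filter] at hf
            obtain ⟨hf1, hf2⟩ := hf
            rw [Finset.mem_filter] at hf1
            exact mk_res hf1.2 hf2 _ (fun v => rfl)
          · intro pg hpg
            rw [Finset.mem_product, Finset.mem_filter] at hpg
            obtain ⟨-, -, hg⟩ := hpg
            refine Prod.ext ?_ ?_
            · funext v
              apply Subtype.ext
              show mkF R S' pg.1 pg.2 v.1.1 = (pg.1 v).1
              rw [mkF_of_mem_S' v.1 v.2]
            · exact res_mk hg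
          · intro f hf
            rw [Finset.mem_filter] at hf
            obtain ⟨hf1, hf2⟩ := hf
            rw [Finset.mem_filter] at hf1
            congr 1
            exact stat_decomp' hf1.2 hR ρ hf2 _ (fun v => rfl)
        rw [hbij]
        -- split the exponent and factor
        have hsplit : ∀ pg : (({x // x ∈ S'} → {x // x ∈ R}) × (Aux R → Aux R)),
            (Polynomial.X : Polynomial ℚ) ^
              (S'.card.choose 2 + (∑ v ∈ Finset.univ, (ρ R (pg.1 v) : ℕ)) +
                gstat (rhoAux R ρ) S' pg.2)
            = ((Polynomial.X : Polynomial ℚ) ^ (S'.card.choose 2) *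
               (Polynomial.X : Polynomial ℚ) ^ (∑ v ∈ Finset.univ, (ρ R (pg.1 v) : ℕ))) *
              (Polynomial.X : Polynomial ℚ) ^ gstat (rhoAux R ρ) S' pg.2 := by
          intro pg
          rw [← pow_add, ← pow_add]
        rw [Finset.sum_congr rfl (fun pg _ => hsplit pg)]
        rw [Finset.sum_product]
        dsimp only
        rw [Finset.sum_congr rfl
          (fun p _ => (Finset.mul_sum _ _ _).symm), ← Finset.sum_mul]
        have hihg : (∑ g ∈ Finset.univ.filter (fun g : Aux R → Aux R => gForest S' g),
            (Polynomial.X : Polynomial ℚ) ^ gstat (rhoAux R ρ) S' g)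
            = J (Fintype.card α - R.card) S'.card := by
          rw [← hN']
          exact (ih (Aux R) S' (by omega) hS'ne (rhoAux R ρ)).symm
        rw [hihg]
        congr 1
        -- sum over parent maps
        have hp : (∑ p : {x // x ∈ S'} → {x // x ∈ R},
            (Polynomial.X : Polynomial ℚ) ^ (S'.card.choose 2) *
              (Polynomial.X : Polynomial ℚ) ^ (∑ v ∈ Finset.univ, (ρ R (p v) : ℕ)))
            = (Polynomial.X : Polynomial ℚ) ^ (S'.card.choose 2) *
              ∑ p : {x // x ∈ S'} → {x // x ∈ R},
                (Polynomial.X : Polynomial ℚ) ^ (∑ v ∈ Finset.univ, (ρ R (p v) : ℕ)) := by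
          rw [Finset.mul_sum]
        rw [hp]
        congr 1
        have hpow : ∀ p : {x // x ∈ S'} → {x // x ∈ R},
            (Polynomial.X : Polynomial ℚ) ^ (∑ v ∈ Finset.univ, (ρ R (p v) : ℕ))
            = ∏ v : {x // x ∈ S'}, (Polynomial.X : Polynomial ℚ) ^ (ρ R (p v) : ℕ) :=
          fun p => (Finset.prod_pow_eq_pow_sum _ _ _).symm
        rw [Finset.sum_congr rfl (fun p _ => hpow p)]
        rw [← Fintype.prod_sum (fun _ (u : {x // x ∈ R}) =>
          (Polynomial.X : Polynomial ℚ) ^ (ρ R u : ℕ))]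
        have hqnat : (∑ u : {x // x ∈ R}, (Polynomial.X : Polynomial ℚ) ^ (ρ R u : ℕ))
            = qNat R.card := by
          rw [← Equiv.sum_comp (ρ R).symm
            (fun u : {x // x ∈ R} => (Polynomial.X : Polynomial ℚ) ^ (ρ R u : ℕ))]
          simp only [Equiv.apply_symm_apply]
          rw [Fin.sum_univ_eq_sum_range (fun i => (Polynomial.X : Polynomial ℚ) ^ i)]
          rfl
        rw [Finset.prod_congr rfl (fun v _ => by rw [hqnat])]
        rw [Finset.prod_const, Finset.card_univ, Fintype.card_coe]
      rw [Finset.sum_congr rfl hinner]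
      -- group by cardinality
      have hmaps2 : ∀ S' ∈ t, S'.card ∈ Finset.Icc 1 (Fintype.card α - R.card) := by
        intro S' hS'
        rw [ht, Finset.mem_filter] at hS'
        rw [Finset.mem_Icc]
        have h1 := hS'.2.card_pos
        have h2 := Finset.card_le_univ S'
        omega
      rw [← Finset.sum_fiberwise_of_maps_to hmaps2]
      rw [J]
      rw [dif_neg (by omega : ¬ R.card = 0), dif_neg (by omega : ¬ Fintype.card α ≤ R.card)]
      apply Finset.sum_congr rfl
      intro j hj
      rw [Finset.mem_Icc] at hj
      have hfib : t.filter (fun S' => S'.card = j) =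
          Finset.powersetCard j (Finset.univ : Finset (Aux R)) := by
        ext S'
        rw [Finset.mem_filter, ht, Finset.mem_filter, Finset.mem_powersetCard]
        constructor
        · rintro ⟨⟨-, -⟩, hc⟩
          exact ⟨Finset.subset_univ _, hc⟩
        · rintro ⟨-, hc⟩
          refine ⟨⟨Finset.mem_univ _, ?_⟩, hc⟩
          rw [← Finset.card_pos, hc]
          omega
      have hsum : ∑ S' ∈ t.filter (fun S' => S'.card = j),
          (Polynomial.X : Polynomial ℚ) ^ (S'.card.choose 2) *
            qNat R.card ^ S'.card * J (Fintype.card α - R.card) S'.card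
          = ((Fintype.card α - R.card).choose j) •
            ((Polynomial.X : Polynomial ℚ) ^ (j.choose 2) *
              qNat R.card ^ j * J (Fintype.card α - R.card) j) := by
        have hconst : ∀ S'' ∈ t.filter (fun S' => S'.card = j),
            (Polynomial.X : Polynomial ℚ) ^ (S''.card.choose 2) *
              qNat R.card ^ S''.card * J (Fintype.card α - R.card) S''.card
            = (Polynomial.X : Polynomial ℚ) ^ (j.choose 2) *
              qNat R.card ^ j * J (Fintype.card α - R.card) j := by
          intro S'' hS''
          rw [Finset.mem_filter] at hS''
          rw [hS''.2]
        rw [Finset.sum_congr rfl hconst, Finset.sum_const, hfib,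
          Finset.card_powersetCard, Finset.card_univ, hN']
      rw [hsum, nsmul_eq_mul]
      push_cast
      ring

end sub

end ForestAux

open scoped Classical in
/-- for `n ≥ 2`, `1 ≤ r ≤ n − 1`, `R ⊆ {1,…,n}` with `|R| = r`,
and any ranking `ρ`, `J_n^{(r)}(q) = ∑_F q^{l_ρ(F)}`, the sum being over all
rooted forests on `{1, …, n}` with root set `R`. -/
theorem J_eq_sum_forests (n r : ℕ) (hn : 2 ≤ n) (hr : 1 ≤ r) (hrn : r + 1 ≤ n)
    (R : Finset (Fin n)) (hR : R.card = r) (ρ : Ranking n) :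
    J n r =
      ∑ f ∈ Finset.univ.filter (fun f : Fin n → Fin n => IsForest R f),
        Polynomial.X ^ levelStat ρ R f := by
  have hRne : R.Nonempty := Finset.card_pos.mp (by omega)
  have hcard : Fintype.card (Fin n) = n := Fintype.card_fin n
  have key := ForestAux.gen n (Fin n) R (by rw [hcard]) hRne ρ
  rw [hcard, hR] at key
  rw [key]
  have hstat : ∀ f : Fin n → Fin n, ForestAux.gstat ρ R f = levelStat ρ R f := by
    intro f
    unfold ForestAux.gstat
    rw [hcard]
    rfl
  have hfil : (Finset.univ.filter fun f : Fin n → Fin n => ForestAux.gForest R f)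
      = Finset.univ.filter fun f : Fin n → Fin n => IsForest R f := by
    apply Finset.filter_congr
    intro f _
    exact Iff.rfl
  exact Finset.sum_congr hfil (fun f _ => by rw [hstat])


end
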